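/- Every Boolean function g : Bool^n → Bool is computed by some term built from the variables x_1,…,x_n, the constants true and false, and self-dual Boolean functions. In other words, the set of all self-dual Boolean functions together with the two constants generates, under composition, all Boolean functions. -/

import Mathlib

/-- A Boolean operator/function: an arity `n` together with a function `Bool^n → Bool`. -/
abbrev BOp : Type := Σ n : ℕ, (Fin n → Bool) → Bool

/-- Terms over Boolean functions, in variables `x_0, …, x_{n-1}`. -/
inductive BTerm (n : ℕ) : Type where
  | var : Fin n → BTerm n
  | app : (o : BOp) → (Fin o.1 → BTerm n) → BTerm n

/-- The Boolean function computed by a term. -/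
def BTerm.eval {n : ℕ} (v : Fin n → Bool) : BTerm n → Bool
  | .var i => v i
  | .app o ts => o.2 (fun j => BTerm.eval v (ts j))

/-- `t.over B` : the term `t` uses only functions from `B`. -/
def BTerm.over {n : ℕ} (B : Set BOp) : BTerm n → Prop
  | .var _ => True
  | .app o ts => o ∈ B ∧ ∀ j, BTerm.over B (ts j)

/-- Number of occurrences of the variable `x_i` in the syntax tree of a term. -/
def BTerm.count {n : ℕ} (i : Fin n) : BTerm n → ℕ
  | .var j => if j = i then 1 else 0
  | .app _ ts => ∑ j, BTerm.count i (ts j)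

/-- The constants true and false as nullary Boolean functions. -/
def topOp : BOp := ⟨0, fun _ => true⟩
def botOp : BOp := ⟨0, fun _ => false⟩

/-- A Boolean function is self-dual if negating all arguments negates its value. -/
def selfDual (o : BOp) : Prop := ∀ v : Fin o.1 → Bool, o.2 (fun i => !(v i)) = !(o.2 v)

/-- every Boolean function `g : Bool^n → Bool` is computed by a term built
from the variables, the constants `true` and `false`, and self-dual Boolean functions. -/
theorem stmt_11 (n : ℕ) (g : (Fin n → Bool) → Bool) :
    ∃ t : BTerm n, t.over ({o | selfDual o} ∪ {topOp, botOp}) ∧ ∀ v, t.eval v = g v := by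
  -- the self-dual extension of g with one extra argument
  set h : BOp := ⟨n + 1, fun w =>
      if w (Fin.last n) then !g (fun i => !(w i.castSucc)) else g (fun i => w i.castSucc)⟩
    with hh
  have hsd : selfDual h := by
    intro w
    simp only [h]
    cases hw : w (Fin.last n) <;> simp [hw]
  refine ⟨.app h (fun j => if hj : (j : ℕ) < n then .var ⟨j, hj⟩ else .app botOp Fin.elim0),
    ⟨Or.inl hsd, fun j => ?_⟩, fun v => ?_⟩
  · by_cases hj : (j : ℕ) < n
    · simp [hj, BTerm.over]
    · simp only [hj, dif_neg, not_false_iff]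
      exact ⟨by simp, fun j => j.elim0⟩
  · simp only [BTerm.eval, h]
    have hlast : ¬ ((Fin.last n : Fin (n+1)) : ℕ) < n := by simp
    rw [dif_neg hlast]
    simp only [BTerm.eval, botOp]
    have key : ∀ i : Fin n, BTerm.eval v (if hj : ((i.castSucc : Fin (n+1)) : ℕ) < n
        then .var (n := n) ⟨i.castSucc, hj⟩
        else .app botOp Fin.elim0) = v i := by
      intro i
      have hi : ((i.castSucc : Fin (n+1)) : ℕ) < n := i.isLt
      rw [dif_pos hi]
      rfl
    simp only [Bool.false_eq_true, if_false]
    exact congrArg g (funext key)
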